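/- For every integer n ≥ 4, setting δ = n^{−1/2}, s_min = n^{−1/4}, s_max = n^{1/4}, and for every η ∈ [0, 1/(6n)], the following two real quantities are nonnegative: (i) η^2 (n−1)(1−δ) s_min/(2n) − Σ_{m=4}^{n} η^m (s_max^m + s_max n^{m−1} δ^{m−1}) − (η^3/6)(3 s_max^3/n + s_max n^{1/2}(n^2 δ^4 + 6 n δ^2 + 1)^{1/2}); and (ii) 1 − s_max Σ_{m=1}^{n} η^m n^{m−1} δ^{m−1}. -/

import Mathlib

lemma geo_bound (r : ℝ) (hr0 : 0 ≤ r) (hr : r ≤ 1/12) (a n : ℕ) :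
    ∑ m ∈ Finset.Icc a n, r ^ m ≤ 12/11 * r ^ a := by
  rw [← Finset.Ico_add_one_right_eq_Icc, Finset.sum_Ico_eq_sum_range]
  calc ∑ i ∈ Finset.range (n + 1 - a), r ^ (a + i)
      = r ^ a * ∑ i ∈ Finset.range (n + 1 - a), r ^ i := by
        rw [Finset.mul_sum]; exact Finset.sum_congr rfl fun i _ => by rw [pow_add]
    _ ≤ r ^ a * (12/11) := by
        apply mul_le_mul_of_nonneg_left _ (pow_nonneg hr0 a)
        have hne : r ≠ 1 := by intro h; rw [h] at hr; norm_num at hr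
        rw [geom_sum_eq hne]
        rw [div_le_iff_of_neg (by linarith : r - 1 < 0)]
        have : 0 ≤ r ^ (n + 1 - a) := pow_nonneg hr0 _
        nlinarith
    _ = 12/11 * r ^ a := by ring


lemma keypoly (t x : ℝ) (ht0 : 0 < t) (ht1 : 1 ≤ t) (ht2 : 2 ≤ t ^ 2)
    (hx0 : 0 ≤ x) (hu : x * t ^ 4 ≤ 1/6) :
    0 ≤ x ^ 2 * (t ^ 4 - 1) * (t ^ 2 - 1)
        - (24/11 * x ^ 4 * t ^ 11 + 24/11 * x ^ 4 * t ^ 14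
          + x ^ 3 * t ^ 6 + x ^ 3 * t ^ 10) := by
  have hu2 : x ^ 2 * t ^ 8 ≤ 1/36 := by
    nlinarith [mul_nonneg hx0 (by positivity : (0:ℝ) ≤ t ^ 4)]
  have hb1 : x ^ 4 * t ^ 14 ≤ x ^ 2 * t ^ 6 / 36 := by
    have h := mul_le_mul_of_nonneg_left hu2 (by positivity : (0:ℝ) ≤ x ^ 2 * t ^ 6)
    nlinarith [h]
  have hb2 : x ^ 4 * t ^ 11 ≤ x ^ 2 * t ^ 3 / 36 := by
    have h := mul_le_mul_of_nonneg_left hu2 (by positivity : (0:ℝ) ≤ x ^ 2 * t ^ 3)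
    nlinarith [h]
  have hb3 : x ^ 3 * t ^ 10 ≤ x ^ 2 * t ^ 6 / 6 := by
    have h := mul_le_mul_of_nonneg_left hu (by positivity : (0:ℝ) ≤ x ^ 2 * t ^ 6)
    nlinarith [h]
  have hb4 : x ^ 3 * t ^ 6 ≤ x ^ 2 * t ^ 2 / 6 := by
    have h := mul_le_mul_of_nonneg_left hu (by positivity : (0:ℝ) ≤ x ^ 2 * t ^ 2)
    nlinarith [h]
  have hg : 0 ≤ (t ^ 4 - 1) * (t ^ 2 - 1)
      - 24/11 * (t ^ 3 / 36 + t ^ 6 / 36) - (t ^ 2 / 6 + t ^ 6 / 6) := by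
    nlinarith [mul_nonneg (sub_nonneg.2 ht2) (by positivity : (0:ℝ) ≤ t ^ 4),
      sq_nonneg (t ^ 2 - 77/64),
      mul_nonneg (sub_nonneg.2 ht1) (by positivity : (0:ℝ) ≤ t ^ 3)]
  have hgm := mul_le_mul_of_nonneg_left hg (sq_nonneg x)
  nlinarith [hb1, hb2, hb3, hb4, hgm]

set_option maxHeartbeats 1000000 in
theorem statement9 (n : ℕ) (hn : 4 ≤ n) (δ smin smax : ℝ)
    (hδ : δ = (n : ℝ) ^ (-(1 / 2) : ℝ))
    (hsmin : smin = (n : ℝ) ^ (-(1 / 4) : ℝ))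
    (hsmax : smax = (n : ℝ) ^ ((1 / 4) : ℝ)) :
    ∀ η ∈ Set.Icc (0 : ℝ) (1 / (6 * (n : ℝ))),
      (0 ≤ η ^ 2 * ((n : ℝ) - 1) * (1 - δ) * smin / (2 * (n : ℝ))
          - ∑ m ∈ Finset.Icc 4 n, η ^ m * (smax ^ m + smax * (n : ℝ) ^ (m - 1) * δ ^ (m - 1))
          - (η ^ 3 / 6) * (3 * smax ^ 3 / (n : ℝ)
              + smax * Real.sqrt (n : ℝ) *
                Real.sqrt ((n : ℝ) ^ 2 * δ ^ 4 + 6 * (n : ℝ) * δ ^ 2 + 1)))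
      ∧ 0 ≤ 1 - smax * ∑ m ∈ Finset.Icc 1 n, η ^ m * (n : ℝ) ^ (m - 1) * δ ^ (m - 1) := by
  intro η hη
  obtain ⟨hη0, hηle⟩ := hη
  have hN0 : (0:ℝ) < (n:ℝ) := by positivity
  have hN4 : (4:ℝ) ≤ (n:ℝ) := by exact_mod_cast hn
  have ht0 : 0 < smax := by rw [hsmax]; positivity
  have ht4 : smax ^ 4 = (n:ℝ) := by
    rw [hsmax, ← Real.rpow_natCast ((n:ℝ) ^ ((1/4 : ℝ))) 4, ← Real.rpow_mul hN0.le]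
    norm_num
  have hNt : (n:ℝ) = smax ^ 4 := ht4.symm
  have hδt : δ = (smax ^ 2)⁻¹ := by
    have h2 : smax ^ 2 = (n:ℝ) ^ ((1/2 : ℝ)) := by
      rw [hsmax, ← Real.rpow_natCast ((n:ℝ) ^ ((1/4 : ℝ))) 2, ← Real.rpow_mul hN0.le]
      norm_num
    rw [hδ, h2, ← Real.rpow_neg hN0.le]
  have hsmin_t : smin = smax⁻¹ := by
    rw [hsmin, hsmax, ← Real.rpow_neg hN0.le]
  have hsqrtN : Real.sqrt (smax ^ 4) = smax ^ 2 := by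
    rw [show smax ^ 4 = (smax ^ 2) ^ 2 by ring, Real.sqrt_sq (by positivity)]
  -- basic numeric facts about smax
  have ht2 : 2 ≤ smax ^ 2 := by nlinarith [sq_nonneg (smax ^ 2 - 2), sq_nonneg smax]
  have ht1 : 1 ≤ smax := by nlinarith
  have ht3 : 2 ≤ smax ^ 3 := by nlinarith
  have hu : η * smax ^ 4 ≤ 1/6 := by
    rw [le_div_iff₀ (by positivity)] at hηle
    nlinarith [hηle, hNt]
  have hr1 : η * smax ≤ 1/12 := by
    nlinarith [mul_nonneg (mul_nonneg hη0 ht0.le) (sub_nonneg.2 ht3)]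
  have hr1' : 0 ≤ η * smax := mul_nonneg hη0 ht0.le
  have hr2 : η * smax ^ 2 ≤ 1/12 := by
    nlinarith [mul_nonneg (mul_nonneg hη0 (sq_nonneg smax)) (sub_nonneg.2 ht2)]
  have hr2' : 0 ≤ η * smax ^ 2 := by positivity
  have hs8 : Real.sqrt 8 ≤ 3 := by
    rw [show (3:ℝ) = Real.sqrt 9 by
      rw [show (9:ℝ) = 3 ^ 2 by norm_num, Real.sqrt_sq (by norm_num)]]
    exact Real.sqrt_le_sqrt (by norm_num)
  simp only [hNt, hδt, hsmin_t]
  constructor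
  · -- part (i)
    have hsum_eq : ∑ m ∈ Finset.Icc 4 n,
          η ^ m * (smax ^ m + smax * (smax ^ 4) ^ (m - 1) * ((smax ^ 2)⁻¹) ^ (m - 1))
        = (∑ m ∈ Finset.Icc 4 n, (η * smax) ^ m)
          + smax⁻¹ * ∑ m ∈ Finset.Icc 4 n, (η * smax ^ 2) ^ m := by
      rw [Finset.mul_sum, ← Finset.sum_add_distrib]
      refine Finset.sum_congr rfl fun m hm => ?_
      have hm4 : 4 ≤ m := (Finset.mem_Icc.mp hm).1
      obtain ⟨k, rfl⟩ : ∃ k, m = k + 1 := ⟨m - 1, by omega⟩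
      simp only [Nat.add_sub_cancel]
      have e : (smax ^ 4) ^ k * ((smax ^ 2)⁻¹) ^ k = (smax ^ 2) ^ k := by
        rw [← mul_pow, show smax ^ 4 * (smax ^ 2)⁻¹ = smax ^ 2 by
          rw [show smax ^ 4 = smax ^ 2 * smax ^ 2 by ring, mul_inv_cancel_right₀ (by positivity)]]
      rw [mul_assoc smax, e]
      rw [mul_pow η smax, mul_pow η (smax ^ 2)]
      field_simp
      ring
    have hgeo1 := geo_bound (η * smax) hr1' hr1 4 n
    have hgeo2 := geo_bound (η * smax ^ 2) hr2' hr2 4 n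
    have hsum_le : ∑ m ∈ Finset.Icc 4 n,
          η ^ m * (smax ^ m + smax * (smax ^ 4) ^ (m - 1) * ((smax ^ 2)⁻¹) ^ (m - 1))
        ≤ 12/11 * (η * smax) ^ 4 + smax⁻¹ * (12/11 * (η * smax ^ 2) ^ 4) := by
      rw [hsum_eq]
      have h2 : smax⁻¹ * ∑ m ∈ Finset.Icc 4 n, (η * smax ^ 2) ^ m
          ≤ smax⁻¹ * (12/11 * (η * smax ^ 2) ^ 4) :=
        mul_le_mul_of_nonneg_left hgeo2 (by positivity)
      linarith
    have harg : (smax ^ 4) ^ 2 * ((smax ^ 2)⁻¹) ^ 4 + 6 * smax ^ 4 * ((smax ^ 2)⁻¹) ^ 2 + 1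
        = 8 := by field_simp; ring
    have hCeq : smax * Real.sqrt (smax ^ 4) *
        Real.sqrt ((smax ^ 4) ^ 2 * ((smax ^ 2)⁻¹) ^ 4 + 6 * smax ^ 4 * ((smax ^ 2)⁻¹) ^ 2 + 1)
        = smax ^ 3 * Real.sqrt 8 := by rw [harg, hsqrtN]; ring
    have hC_le : (η ^ 3 / 6) * (3 * smax ^ 3 / (smax ^ 4) +
          smax * Real.sqrt (smax ^ 4) *
          Real.sqrt ((smax ^ 4) ^ 2 * ((smax ^ 2)⁻¹) ^ 4 + 6 * smax ^ 4 * ((smax ^ 2)⁻¹) ^ 2 + 1))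
        ≤ (η ^ 3 / 6) * (3 * smax ^ 3 / (smax ^ 4) + smax ^ 3 * 3) := by
      rw [hCeq]
      have h1 := mul_le_mul_of_nonneg_left hs8 (by positivity : (0:ℝ) ≤ smax ^ 3)
      have h2 := mul_le_mul_of_nonneg_left (by linarith :
          3 * smax ^ 3 / smax ^ 4 + smax ^ 3 * Real.sqrt 8
            ≤ 3 * smax ^ 3 / smax ^ 4 + smax ^ 3 * 3)
        (by positivity : (0:ℝ) ≤ η ^ 3 / 6)
      linarith
    have hkey : 12/11 * (η * smax) ^ 4 + smax⁻¹ * (12/11 * (η * smax ^ 2) ^ 4)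
          + (η ^ 3 / 6) * (3 * smax ^ 3 / (smax ^ 4) + smax ^ 3 * 3)
        ≤ η ^ 2 * (smax ^ 4 - 1) * (1 - (smax ^ 2)⁻¹) * smax⁻¹ / (2 * smax ^ 4) := by
      rw [← sub_nonneg]
      have hrw : η ^ 2 * (smax ^ 4 - 1) * (1 - (smax ^ 2)⁻¹) * smax⁻¹ / (2 * smax ^ 4)
            - (12/11 * (η * smax) ^ 4 + smax⁻¹ * (12/11 * (η * smax ^ 2) ^ 4)
              + (η ^ 3 / 6) * (3 * smax ^ 3 / (smax ^ 4) + smax ^ 3 * 3))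
          = (η ^ 2 * (smax ^ 4 - 1) * (smax ^ 2 - 1)
              - (24/11 * η ^ 4 * smax ^ 11 + 24/11 * η ^ 4 * smax ^ 14
                + η ^ 3 * smax ^ 6 + η ^ 3 * smax ^ 10)) / (2 * smax ^ 7) := by
        field_simp
        ring
      rw [hrw]
      apply div_nonneg _ (by positivity)
      have := keypoly smax η ht0 ht1 ht2 hη0 hu
      linarith
    linarith
  · -- part (ii)
    have hsum_eq : ∑ m ∈ Finset.Icc 1 n, η ^ m * (smax ^ 4) ^ (m - 1) * ((smax ^ 2)⁻¹) ^ (m - 1)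
        = (smax ^ 2)⁻¹ * ∑ m ∈ Finset.Icc 1 n, (η * smax ^ 2) ^ m := by
      rw [Finset.mul_sum]
      refine Finset.sum_congr rfl fun m hm => ?_
      have hm1 : 1 ≤ m := (Finset.mem_Icc.mp hm).1
      obtain ⟨k, rfl⟩ : ∃ k, m = k + 1 := ⟨m - 1, by omega⟩
      simp only [Nat.add_sub_cancel]
      have e : (smax ^ 4) ^ k * ((smax ^ 2)⁻¹) ^ k = (smax ^ 2) ^ k := by
        rw [← mul_pow, show smax ^ 4 * (smax ^ 2)⁻¹ = smax ^ 2 by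
          rw [show smax ^ 4 = smax ^ 2 * smax ^ 2 by ring, mul_inv_cancel_right₀ (by positivity)]]
      rw [mul_assoc (η ^ (k + 1)), e]
      rw [mul_pow η (smax ^ 2)]
      field_simp
      ring
    have hgeo := geo_bound (η * smax ^ 2) hr2' hr2 1 n
    have h1 : smax * ∑ m ∈ Finset.Icc 1 n, η ^ m * (smax ^ 4) ^ (m - 1) * ((smax ^ 2)⁻¹) ^ (m - 1)
        ≤ smax * ((smax ^ 2)⁻¹ * (12/11 * (η * smax ^ 2) ^ 1)) := by
      rw [hsum_eq]
      exact mul_le_mul_of_nonneg_left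
        (mul_le_mul_of_nonneg_left hgeo (by positivity)) ht0.le
    have h2 : smax * ((smax ^ 2)⁻¹ * (12/11 * (η * smax ^ 2) ^ 1)) = 12/11 * (η * smax) := by
      field_simp
    rw [h2] at h1
    linarith
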